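/- arXiv:cs/0007032 — 2 statements merged into one kernel-verified Lean document; each statement's English description precedes it below -/
import Mathlib

section
/- In the canonical model of MPT, the cross relation holds: for all maximal consistent sets s, s', t, if s →□ s' and s' →K t, then there exists t' with s →K t' and t' →□ t. -/
inductive Fml : Type
  | atom : ℕ → Fml
  | neg : Fml → Fml
  | and : Fml → Fml → Fml
  | K : Fml → Fml
  | box : Fml → Fml

def Fml.imp (φ ψ : Fml) : Fml := (φ.and ψ.neg).neg
def Fml.or (φ ψ : Fml) : Fml := (φ.neg.and ψ.neg).neg

/-- Boolean evaluation treating atoms, `K`-formulae and `□`-formulae as opaque;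
used to express "all propositional tautologies". -/
def evalB (v : Fml → Bool) : Fml → Bool
  | .neg φ => !(evalB v φ)
  | .and φ ψ => evalB v φ && evalB v ψ
  | φ => v φ

/-- Provability in the bimodal system MPT. -/
inductive Prf : Fml → Prop
  | taut (φ : Fml) : (∀ v : Fml → Bool, evalB v φ = true) → Prf φ
  | mp {φ ψ : Fml} : Prf (φ.imp ψ) → Prf φ → Prf ψ
  | atomPerm (n : ℕ) : Prf ((((Fml.atom n).imp (Fml.atom n).box)).and
      (((Fml.atom n).neg).imp ((Fml.atom n).neg).box))
  | normBox (φ ψ : Fml) : Prf ((φ.imp ψ).box.imp (φ.box.imp ψ.box))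
  | boxT (φ : Fml) : Prf (φ.box.imp φ)
  | box4 (φ : Fml) : Prf (φ.box.imp φ.box.box)
  | normK (φ ψ : Fml) : Prf ((φ.imp ψ).K.imp (φ.K.imp ψ.K))
  | kT (φ : Fml) : Prf (φ.K.imp φ)
  | k4 (φ : Fml) : Prf (φ.K.imp φ.K.K)
  | k5 (φ : Fml) : Prf (φ.imp φ.neg.K.neg.K)
  | cross (φ : Fml) : Prf (φ.box.K.imp φ.K.box)
  | conn (φ ψ : Fml) : Prf (((φ.box.imp ψ).box).or ((ψ.box.imp φ).box))
  | ntree (φ ψ : Fml) : Prf (((φ.K.box).and ((φ.box.imp ψ.box).K)).imp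
      ((φ.box.imp ψ.box).K.box))
  | necK {φ : Fml} : Prf φ → Prf φ.K
  | necBox {φ : Fml} : Prf φ → Prf φ.box

/-- Conjunction of a finite list of formulae (empty list ↦ a tautology). -/
def conj : List Fml → Fml
  | [] => ((Fml.atom 0).and (Fml.atom 0).neg).neg
  | φ :: l => φ.and (conj l)

/-- A set of formulae is consistent if no finite conjunction from it is refutable. -/
def Consistent (s : Set Fml) : Prop :=
  ∀ l : List Fml, (∀ φ ∈ l, φ ∈ s) → ¬ Prf (conj l).neg

/-- Maximal consistent sets: the points of the canonical model. -/
def MCS (s : Set Fml) : Prop :=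
  Consistent s ∧ ∀ t : Set Fml, Consistent t → s ⊆ t → s = t

/-- Canonical `□`-accessibility: `s →□ t` iff `{φ : □φ ∈ s} ⊆ t`. -/
def RB (s t : Set Fml) : Prop := ∀ φ : Fml, φ.box ∈ s → φ ∈ t

/-- Canonical `K`-accessibility: `s →K t` iff `{φ : Kφ ∈ s} ⊆ t`. -/
def RK (s t : Set Fml) : Prop := ∀ φ : Fml, φ.K ∈ s → φ ∈ t

/- ## Auxiliary lemmas -/

lemma evalB_neg' (v : Fml → Bool) (φ : Fml) : evalB v φ.neg = !(evalB v φ) := rfl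
lemma evalB_and' (v : Fml → Bool) (φ ψ : Fml) :
    evalB v (φ.and ψ) = (evalB v φ && evalB v ψ) := rfl
lemma evalB_imp' (v : Fml → Bool) (φ ψ : Fml) :
    evalB v (φ.imp ψ) = (!(evalB v φ) || evalB v ψ) := by
  simp [Fml.imp, evalB_neg', evalB_and']
lemma evalB_conj_nil (v : Fml → Bool) : evalB v (conj []) = true := by
  show (!(v (Fml.atom 0) && !(v (Fml.atom 0)))) = true
  cases v (Fml.atom 0) <;> rfl

lemma prf_trans {φ ψ χ : Fml} (h1 : Prf (φ.imp ψ)) (h2 : Prf (ψ.imp χ)) :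
    Prf (φ.imp χ) := by
  have t : Prf ((φ.imp ψ).imp ((ψ.imp χ).imp (φ.imp χ))) := Prf.taut _ fun v => by
    simp only [evalB_imp']
    cases evalB v φ <;> cases evalB v ψ <;> cases evalB v χ <;> rfl
  exact (t.mp h1).mp h2

lemma prf_imp_of_prf {φ : Fml} (ψ : Fml) (h : Prf φ) : Prf (ψ.imp φ) := by
  have t : Prf (φ.imp (ψ.imp φ)) := Prf.taut _ fun v => by
    simp only [evalB_imp']
    cases evalB v φ <;> cases evalB v ψ <;> rfl
  exact t.mp h

lemma prf_combine {φ ψ χ : Fml} (h1 : Prf (φ.imp ψ)) (h2 : Prf (φ.imp χ)) :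
    Prf (φ.imp (ψ.and χ)) := by
  have t : Prf ((φ.imp ψ).imp ((φ.imp χ).imp (φ.imp (ψ.and χ)))) := Prf.taut _ fun v => by
    simp only [evalB_imp', evalB_and']
    cases evalB v φ <;> cases evalB v ψ <;> cases evalB v χ <;> rfl
  exact (t.mp h1).mp h2

lemma prf_contrapose {φ ψ : Fml} (h1 : Prf (φ.imp ψ)) (h2 : Prf ψ.neg) : Prf φ.neg := by
  have t : Prf ((φ.imp ψ).imp (ψ.neg.imp φ.neg)) := Prf.taut _ fun v => by
    simp only [evalB_imp', evalB_neg']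
    cases evalB v φ <;> cases evalB v ψ <;> rfl
  exact ((t.mp h1).mp h2)

lemma conj_imp_of_mem {φ : Fml} : ∀ {l : List Fml}, φ ∈ l → Prf ((conj l).imp φ)
  | ψ :: l, h => by
    rcases List.mem_cons.1 h with h | h
    · subst h
      exact Prf.taut _ fun v => by
        show evalB v ((conj (φ :: l)).imp φ) = true
        simp only [conj, evalB_imp', evalB_and']
        cases evalB v φ <;> cases evalB v (conj l) <;> rfl
    · have ih := conj_imp_of_mem h
      have t : Prf ((conj (ψ :: l)).imp (conj l)) := Prf.taut _ fun v => by
        simp only [conj, evalB_imp', evalB_and']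
        cases evalB v ψ <;> cases evalB v (conj l) <;> rfl
      exact prf_trans t ih

lemma conj_imp_conj {l' : List Fml} :
    ∀ {l : List Fml}, (∀ φ ∈ l, Prf ((conj l').imp φ)) → Prf ((conj l').imp (conj l))
  | [], _ => prf_imp_of_prf _ (Prf.taut _ fun v => evalB_conj_nil v)
  | φ :: l, h => by
    have ih := conj_imp_conj (l := l) (fun ψ hψ => h ψ (List.mem_cons_of_mem _ hψ))
    exact prf_combine (h φ (List.mem_cons_self)) ih

lemma conj_imp_conj_subset {l l' : List Fml} (h : ∀ φ ∈ l, φ ∈ l') :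
    Prf ((conj l').imp (conj l)) :=
  conj_imp_conj fun φ hφ => conj_imp_of_mem (h φ hφ)
/-- From a maximal-consistent-set refutation of `conj l` with `l ⊆ A ∪ {φ}`,
extract a list inside `A` refuting together with `φ`. -/
lemma conj_extract {A : Set Fml} {φ : Fml} :
    ∀ {l : List Fml}, (∀ ψ ∈ l, ψ ∈ A ∨ ψ = φ) →
      ∃ l' : List Fml, (∀ ψ ∈ l', ψ ∈ A) ∧ Prf ((conj (φ :: l')).imp (conj l))
  | [], _ => ⟨[], by simp, prf_imp_of_prf _ (Prf.taut _ fun v => evalB_conj_nil v)⟩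
  | χ :: l, h => by
    obtain ⟨l', hl', hp⟩ := conj_extract (l := l)
      (fun ψ hψ => h ψ (List.mem_cons_of_mem _ hψ))
    rcases h χ (List.mem_cons_self) with hχ | hχ
    · refine ⟨χ :: l', ?_, ?_⟩
      · intro ψ hψ; rcases List.mem_cons.1 hψ with h' | h'
        · subst h'; exact hχ
        · exact hl' ψ h'
      · have t : Prf (((conj (φ :: l')).imp (conj l)).imp
            ((conj (φ :: χ :: l')).imp (conj (χ :: l)))) := Prf.taut _ fun v => by
          simp only [conj, evalB_imp', evalB_and']
          cases evalB v φ <;> cases evalB v χ <;> cases evalB v (conj l') <;>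
            cases evalB v (conj l) <;> rfl
        exact t.mp hp
    · subst hχ
      refine ⟨l', hl', ?_⟩
      have t : Prf (((conj (χ :: l')).imp (conj l)).imp
          ((conj (χ :: l')).imp (conj (χ :: l)))) := Prf.taut _ fun v => by
        simp only [conj, evalB_imp', evalB_and']
        cases evalB v χ <;> cases evalB v (conj l') <;> cases evalB v (conj l) <;> rfl
      exact t.mp hp

lemma mcs_thm {s : Set Fml} (hs : MCS s) {φ : Fml} (h : Prf φ) : φ ∈ s := by
  have hcons : Consistent (insert φ s) := by
    intro l hl href
    obtain ⟨l', hl', hp⟩ := conj_extract (A := s) (φ := φ)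
      (fun ψ hψ => (Set.mem_insert_iff.1 (hl ψ hψ)).symm)
    have h1 : Prf ((conj l').imp (conj (φ :: l'))) := by
      have t : Prf (φ.imp ((conj l').imp (conj (φ :: l')))) := Prf.taut _ fun v => by
        simp only [conj, evalB_imp', evalB_and']
        cases evalB v φ <;> cases evalB v (conj l') <;> rfl
      exact t.mp h
    exact hs.1 l' hl' (prf_contrapose (prf_trans h1 hp) href)
  have := hs.2 _ hcons (Set.subset_insert _ _)
  exact this ▸ Set.mem_insert _ _
lemma mcs_mp {s : Set Fml} (hs : MCS s) {φ ψ : Fml} (hφ : φ ∈ s) (himp : φ.imp ψ ∈ s) :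
    ψ ∈ s := by
  have hcons : Consistent (insert ψ s) := by
    intro l hl href
    obtain ⟨l', hl', hp⟩ := conj_extract (A := s) (φ := ψ)
      (fun χ hχ => (Set.mem_insert_iff.1 (hl χ hχ)).symm)
    have t : Prf ((conj (φ :: (φ.imp ψ) :: l')).imp (conj (ψ :: l'))) :=
      Prf.taut _ fun v => by
        simp only [conj, evalB_imp', evalB_and', evalB_neg', Fml.imp, evalB]
        cases evalB v φ <;> cases evalB v ψ <;> cases evalB v (conj l') <;> rfl
    refine hs.1 (φ :: (φ.imp ψ) :: l') ?_ (prf_contrapose (prf_trans t hp) href)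
    intro χ hχ
    rcases List.mem_cons.1 hχ with h' | h'
    · subst h'; exact hφ
    rcases List.mem_cons.1 h' with h'' | h''
    · subst h''; exact himp
    · exact hl' χ h''
  have := hs.2 _ hcons (Set.subset_insert _ _)
  exact this ▸ Set.mem_insert _ _

lemma mcs_closed {s : Set Fml} (hs : MCS s) {φ ψ : Fml} (h : Prf (φ.imp ψ))
    (hφ : φ ∈ s) : ψ ∈ s :=
  mcs_mp hs hφ (mcs_thm hs h)

lemma mcs_not_both {s : Set Fml} (hs : MCS s) {φ : Fml} (h1 : φ ∈ s) (h2 : φ.neg ∈ s) :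
    False := by
  refine hs.1 [φ, φ.neg] ?_ ?_
  · intro χ hχ
    rcases List.mem_cons.1 hχ with h' | h'
    · subst h'; exact h1
    rcases List.mem_cons.1 h' with h'' | h''
    · subst h''; exact h2
    · simp at h''
  · exact Prf.taut _ fun v => by
      simp only [conj, evalB_neg', evalB_and', evalB_conj_nil]
      cases evalB v φ <;> rfl

lemma mcs_conj_mem {s : Set Fml} (hs : MCS s) :
    ∀ {l : List Fml}, (∀ φ ∈ l, φ ∈ s) → conj l ∈ s
  | [], _ => mcs_thm hs (Prf.taut _ fun v => evalB_conj_nil v)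
  | φ :: l, h => by
    have ih := mcs_conj_mem hs (l := l) (fun ψ hψ => h ψ (List.mem_cons_of_mem _ hψ))
    have hφ := h φ (List.mem_cons_self)
    have t : Prf (φ.imp ((conj l).imp (conj (φ :: l)))) := Prf.taut _ fun v => by
      simp only [conj, evalB_imp', evalB_and']
      cases evalB v φ <;> cases evalB v (conj l) <;> rfl
    exact mcs_mp hs ih (mcs_closed hs t hφ)

lemma mcs_neg_mem {s : Set Fml} (hs : MCS s) {φ : Fml} (h : φ ∉ s) : φ.neg ∈ s := by
  by_contra hneg
  -- both insert φ s and insert φ.neg s are inconsistent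
  have hex : ∀ χ : Fml, χ ∉ s → ∃ l : List Fml, (∀ ψ ∈ l, ψ ∈ s) ∧
      Prf ((conj l).imp χ.neg) := by
    intro χ hχ
    have : ¬ Consistent (insert χ s) := by
      intro hc
      exact hχ ((hs.2 _ hc (Set.subset_insert _ _)) ▸ Set.mem_insert _ _)
    simp only [Consistent, not_forall] at this
    obtain ⟨l, hl, href⟩ := this
    rw [not_not] at href
    obtain ⟨l', hl', hp⟩ := conj_extract (A := s) (φ := χ)
      (fun ψ hψ => (Set.mem_insert_iff.1 (hl ψ hψ)).symm)
    refine ⟨l', hl', ?_⟩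
    have hnp : Prf (conj (χ :: l')).neg := prf_contrapose hp href
    have t : Prf ((conj (χ :: l')).neg.imp ((conj l').imp χ.neg)) := Prf.taut _ fun v => by
      simp only [conj, evalB_imp', evalB_and', evalB_neg']
      cases evalB v χ <;> cases evalB v (conj l') <;> rfl
    exact t.mp hnp
  obtain ⟨l₁, hl₁, hp₁⟩ := hex φ h
  obtain ⟨l₂, hl₂, hp₂⟩ := hex φ.neg hneg
  have c₁ : φ.neg ∈ s := mcs_closed hs hp₁ (mcs_conj_mem hs hl₁)
  exact mcs_not_both hs c₁ (mcs_closed hs hp₂ (mcs_conj_mem hs hl₂))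
lemma chain_bound {c : Set (Set Fml)} (hchain : IsChain (· ⊆ ·) c) (hne : c.Nonempty) :
    ∀ l : List Fml, (∀ φ ∈ l, φ ∈ ⋃₀ c) → ∃ u ∈ c, ∀ φ ∈ l, φ ∈ u
  | [], _ => by obtain ⟨u, hu⟩ := hne; exact ⟨u, hu, by simp⟩
  | φ :: l, hl => by
    obtain ⟨u, hu, hlu⟩ := chain_bound hchain hne l
      (fun ψ hψ => hl ψ (List.mem_cons_of_mem _ hψ))
    obtain ⟨w, hw, hφw⟩ := hl φ (List.mem_cons_self)
    rcases eq_or_ne u w with rfl | hne'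
    · exact ⟨u, hu, fun ψ hψ => by
        rcases List.mem_cons.1 hψ with h' | h'
        · exact h' ▸ hφw
        · exact hlu ψ h'⟩
    rcases hchain hu hw hne' with hsub | hsub
    · exact ⟨w, hw, fun ψ hψ => by
        rcases List.mem_cons.1 hψ with h' | h'
        · exact h' ▸ hφw
        · exact hsub (hlu ψ h')⟩
    · exact ⟨u, hu, fun ψ hψ => by
        rcases List.mem_cons.1 hψ with h' | h'
        · exact h' ▸ hsub hφw
        · exact hlu ψ h'⟩

lemma lindenbaum {s : Set Fml} (hs : Consistent s) : ∃ m, s ⊆ m ∧ MCS m := by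
  have hub : ∀ c ⊆ {t : Set Fml | Consistent t}, IsChain (· ⊆ ·) c → c.Nonempty →
      ∃ ub ∈ {t : Set Fml | Consistent t}, ∀ u ∈ c, u ⊆ ub := by
    intro c hc hchain hne
    refine ⟨⋃₀ c, ?_, fun u hu => Set.subset_sUnion_of_mem hu⟩
    intro l hl href
    obtain ⟨u, hu, hlu⟩ := chain_bound hchain hne l hl
    exact hc hu l hlu href
  obtain ⟨m, hsm, hmax⟩ := zorn_subset_nonempty {t : Set Fml | Consistent t} hub s hs
  refine ⟨m, hsm, hmax.1, fun t ht hmt => ?_⟩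
  exact Set.Subset.antisymm hmt (hmax.2 ht hmt)

lemma prf_monoBox {φ ψ : Fml} (h : Prf (φ.imp ψ)) : Prf (φ.box.imp ψ.box) :=
  (Prf.normBox φ ψ).mp h.necBox

lemma prf_monoK {φ ψ : Fml} (h : Prf (φ.imp ψ)) : Prf (φ.K.imp ψ.K) :=
  (Prf.normK φ ψ).mp h.necK

lemma mcs_k_conj {s : Set Fml} (hs : MCS s) :
    ∀ {l : List Fml}, (∀ φ ∈ l, φ.K ∈ s) → (conj l).K ∈ s
  | [], _ => mcs_thm hs (Prf.necK (Prf.taut _ fun v => evalB_conj_nil v))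
  | φ :: l, h => by
    have ih := mcs_k_conj hs (l := l) (fun ψ hψ => h ψ (List.mem_cons_of_mem _ hψ))
    have hφ := h φ (List.mem_cons_self)
    have t : Prf (φ.imp ((conj l).imp (conj (φ :: l)))) := Prf.taut _ fun v => by
      simp only [conj, evalB_imp', evalB_and']
      cases evalB v φ <;> cases evalB v (conj l) <;> rfl
    have h1 : ((conj l).imp (conj (φ :: l))).K ∈ s := mcs_closed hs (prf_monoK t) hφ
    exact mcs_mp hs ih (mcs_mp hs h1 (mcs_thm hs (Prf.normK _ _)))

/-- A disjunction of boxes implies its own box (S4). -/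
lemma boxdisj : ∀ (L : List Fml),
    Prf ((conj (L.map fun ψ => ψ.box.neg)).neg.imp
         ((conj (L.map fun ψ => ψ.box.neg)).neg.box))
  | [] => Prf.taut _ fun v => by
      simp only [List.map_nil, evalB_imp', evalB_neg', evalB_conj_nil]
      rfl
  | ψ :: L => by
    have ih := boxdisj L
    set c := conj (L.map fun χ => χ.box.neg) with hc
    have hD : conj ((ψ :: L).map fun χ => χ.box.neg) = (ψ.box.neg).and c := rfl
    rw [hD]
    set D := ((ψ.box.neg).and c).neg with hDdef
    -- ⊢ □ψ → D
    have e1 : Prf (ψ.box.imp D) := Prf.taut _ fun v => by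
      simp only [hDdef, evalB_imp', evalB_neg', evalB_and']
      cases evalB v ψ.box <;> cases evalB v c <;> rfl
    -- ⊢ □ψ → □D
    have e2 : Prf (ψ.box.imp D.box) := prf_trans (Prf.box4 ψ) (prf_monoBox e1)
    -- ⊢ ¬c → D
    have e3 : Prf (c.neg.imp D) := Prf.taut _ fun v => by
      simp only [hDdef, evalB_imp', evalB_neg', evalB_and']
      cases evalB v ψ.box <;> cases evalB v c <;> rfl
    -- ⊢ ¬c → □D
    have e4 : Prf (c.neg.imp D.box) := prf_trans ih (prf_monoBox e3)
    -- combine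
    have t : Prf ((ψ.box.imp D.box).imp ((c.neg.imp D.box).imp (D.imp D.box))) :=
      Prf.taut _ fun v => by
        simp only [hDdef, evalB_imp', evalB_neg', evalB_and']
        cases evalB v ψ.box <;> cases evalB v c <;> cases evalB v D.box <;> rfl
    exact (t.mp e2).mp e4

lemma conj_append_intro : ∀ (l₁ l₂ : List Fml),
    Prf ((conj l₁).imp ((conj l₂).imp (conj (l₁ ++ l₂))))
  | [], l₂ => Prf.taut _ fun v => by
      simp only [List.nil_append, evalB_imp', evalB_conj_nil]
      cases evalB v (conj l₂) <;> rfl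
  | φ :: l₁, l₂ => by
    have ih := conj_append_intro l₁ l₂
    have t : Prf (((conj l₁).imp ((conj l₂).imp (conj (l₁ ++ l₂)))).imp
        ((conj (φ :: l₁)).imp ((conj l₂).imp (conj ((φ :: l₁) ++ l₂))))) :=
      Prf.taut _ fun v => by
        simp only [List.cons_append, conj, evalB_imp', evalB_and']
        cases evalB v φ <;> cases evalB v (conj l₁) <;> cases evalB v (conj l₂) <;>
          cases evalB v (conj (l₁ ++ l₂)) <;> rfl
    exact t.mp ih
lemma list_partition {P Q : Fml → Prop} :
    ∀ l : List Fml, (∀ χ ∈ l, P χ ∨ Q χ) →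
      ∃ l₁ l₂ : List Fml, (∀ χ ∈ l₁, P χ) ∧ (∀ χ ∈ l₂, Q χ) ∧ ∀ χ ∈ l, χ ∈ l₁ ++ l₂
  | [], _ => ⟨[], [], by simp, by simp, by simp⟩
  | χ :: l, h => by
    obtain ⟨l₁, l₂, h1, h2, hmem⟩ := list_partition l
      (fun ψ hψ => h ψ (List.mem_cons_of_mem _ hψ))
    rcases h χ (List.mem_cons_self) with hP | hQ
    · refine ⟨χ :: l₁, l₂, ?_, h2, ?_⟩
      · intro ψ hψ; rcases List.mem_cons.1 hψ with h' | h'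
        · exact h' ▸ hP
        · exact h1 ψ h'
      · intro ψ hψ; rcases List.mem_cons.1 hψ with h' | h'
        · subst h'; simp
        · have := hmem ψ h'; simp only [List.mem_append, List.mem_cons] at this ⊢; tauto
    · refine ⟨l₁, χ :: l₂, h1, ?_, ?_⟩
      · intro ψ hψ; rcases List.mem_cons.1 hψ with h' | h'
        · exact h' ▸ hQ
        · exact h2 ψ h'
      · intro ψ hψ; rcases List.mem_cons.1 hψ with h' | h'
        · subst h'; simp
        · have := hmem ψ h'; simp only [List.mem_append, List.mem_cons] at this ⊢; tauto

lemma shape_extract {t : Set Fml} :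
    ∀ l : List Fml, (∀ χ ∈ l, ∃ ψ, χ = ψ.box.neg ∧ ψ ∉ t) →
      ∃ L : List Fml, l = L.map (fun ψ => ψ.box.neg) ∧ ∀ ψ ∈ L, ψ ∉ t
  | [], _ => ⟨[], rfl, by simp⟩
  | χ :: l, h => by
    obtain ⟨L, hL, hLt⟩ := shape_extract l (fun ψ hψ => h ψ (List.mem_cons_of_mem _ hψ))
    obtain ⟨ψ, rfl, hψt⟩ := h χ (List.mem_cons_self)
    refine ⟨ψ :: L, by simp [hL], ?_⟩
    intro χ' hχ'
    rcases List.mem_cons.1 hχ' with h' | h'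
    · exact h' ▸ hψt
    · exact hLt χ' h'

/-- Cross property of the MPT canonical model. -/
theorem canonical_cross (s s' t : Set Fml) (hs : MCS s) (hs' : MCS s') (ht : MCS t)
    (h₁ : RB s s') (h₂ : RK s' t) :
    ∃ t' : Set Fml, MCS t' ∧ RK s t' ∧ RB t' t := by
  classical
  set Γ : Set Fml := {φ | φ.K ∈ s} ∪ {χ | ∃ ψ, χ = ψ.box.neg ∧ ψ ∉ t} with hΓ
  have hcons : Consistent Γ := by
    intro l hl href
    obtain ⟨l₁, l₂, h1, h2, hmem⟩ := list_partition
      (P := fun χ => χ.K ∈ s) (Q := fun χ => ∃ ψ : Fml, χ = Fml.neg (Fml.box ψ) ∧ ψ ∉ t) l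
      (fun χ hχ => hl χ hχ)
    obtain ⟨L, rfl, hLt⟩ := shape_extract l₂ h2
    -- notation
    set c₁ := conj l₁ with hc₁
    set c₂ := conj (L.map fun ψ => ψ.box.neg) with hc₂
    -- ⊢ c₁ → ¬c₂
    have hsub : Prf ((conj (l₁ ++ L.map fun ψ => ψ.box.neg)).imp (conj l)) :=
      conj_imp_conj_subset hmem
    have href2 : Prf (conj (l₁ ++ L.map fun ψ => ψ.box.neg)).neg :=
      prf_contrapose hsub href
    have happ := conj_append_intro l₁ (L.map fun ψ => ψ.box.neg)
    have tcomb : Prf ((c₁.imp (c₂.imp (conj (l₁ ++ L.map fun ψ => ψ.box.neg)))).imp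
        ((conj (l₁ ++ L.map fun ψ => ψ.box.neg)).neg.imp (c₁.imp c₂.neg))) :=
      Prf.taut _ fun v => by
        simp only [evalB_imp', evalB_neg']
        cases evalB v c₁ <;> cases evalB v c₂ <;>
          cases evalB v (conj (l₁ ++ L.map fun ψ => ψ.box.neg)) <;> rfl
    have hPD : Prf (c₁.imp c₂.neg) := ((tcomb.mp happ).mp href2)
    -- ⊢ c₁ → □(¬c₂)
    have hC1box : Prf (c₁.imp c₂.neg.box) := prf_trans hPD (boxdisj L)
    -- K c₁ ∈ s
    have hKC1 : c₁.K ∈ s := mcs_k_conj hs h1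
    -- K □(¬c₂) ∈ s
    have hKbox : c₂.neg.box.K ∈ s := mcs_closed hs (prf_monoK hC1box) hKC1
    -- cross axiom: □ K(¬c₂) ∈ s
    have hboxK : c₂.neg.K.box ∈ s := mcs_closed hs (Prf.cross c₂.neg) hKbox
    -- K(¬c₂) ∈ s', so ¬c₂ ∈ t
    have hDt : c₂.neg ∈ t := h₂ _ (h₁ _ hboxK)
    -- but also c₂ ∈ t
    have hc2t : c₂ ∈ t := by
      refine mcs_conj_mem ht ?_
      intro χ hχ
      obtain ⟨ψ, hψL, rfl⟩ := List.mem_map.1 hχ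
      have hψn : ψ.neg ∈ t := mcs_neg_mem ht (hLt ψ hψL)
      have tb : Prf ((ψ.box.imp ψ).imp (ψ.neg.imp ψ.box.neg)) := Prf.taut _ fun v => by
        simp only [evalB_imp', evalB_neg']
        cases evalB v ψ <;> cases evalB v ψ.box <;> rfl
      exact mcs_closed ht (tb.mp (Prf.boxT ψ)) hψn
    exact mcs_not_both ht hc2t hDt
  obtain ⟨t', hΓt', ht'⟩ := lindenbaum hcons
  refine ⟨t', ht', ?_, ?_⟩
  · intro φ hφ
    exact hΓt' (Set.mem_union_left _ hφ)
  · intro ψ hbox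
    by_contra hψt
    exact mcs_not_both ht' hbox (hΓt' (Set.mem_union_right _ ⟨ψ, rfl, hψt⟩))
end

section
/- In the canonical model of MPT, the relation →□ is antisymmetric: if s →□ t and t →□ s, then s = t. -/
/- ===================== auxiliary development ===================== -/

deriving instance DecidableEq for Fml

namespace MPTAux

/-- the canonical contradiction -/
abbrev Bot : Fml := (Fml.atom 0).and (Fml.atom 0).neg

lemma evalB_neg (v : Fml → Bool) (φ : Fml) : evalB v φ.neg = !evalB v φ := rfl
lemma evalB_and (v : Fml → Bool) (φ ψ : Fml) : evalB v (φ.and ψ) = (evalB v φ && evalB v ψ) := rfl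
lemma evalB_atom (v : Fml → Bool) (n : ℕ) : evalB v (Fml.atom n) = v (Fml.atom n) := rfl

lemma conj_nil : conj [] = Bot.neg := rfl
lemma conj_cons (φ : Fml) (l : List Fml) : conj (φ :: l) = φ.and (conj l) := rfl

/- ------------- propositional tautologies ------------- -/

lemma tId (a : Fml) : Prf (a.imp a) := by
  apply Prf.taut; intro v
  simp only [Fml.imp, evalB_neg, evalB_and]
  cases evalB v a <;> rfl

lemma tK (a b : Fml) : Prf (a.imp (b.imp a)) := by
  apply Prf.taut; intro v
  simp only [Fml.imp, evalB_neg, evalB_and]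
  cases evalB v a <;> cases evalB v b <;> rfl

lemma tSyl (a b c : Fml) : Prf ((a.imp b).imp ((b.imp c).imp (a.imp c))) := by
  apply Prf.taut; intro v
  simp only [Fml.imp, evalB_neg, evalB_and]
  cases evalB v a <;> cases evalB v b <;> cases evalB v c <;> rfl

lemma tTrans {a b c : Fml} (h1 : Prf (a.imp b)) (h2 : Prf (b.imp c)) : Prf (a.imp c) :=
  Prf.mp (Prf.mp (tSyl a b c) h1) h2

lemma tS (c a b : Fml) : Prf ((c.imp (a.imp b)).imp ((c.imp a).imp (c.imp b))) := by
  apply Prf.taut; intro v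
  simp only [Fml.imp, evalB_neg, evalB_and]
  cases evalB v a <;> cases evalB v b <;> cases evalB v c <;> rfl

lemma tMp2 {c a b : Fml} (h1 : Prf (c.imp (a.imp b))) (h2 : Prf (c.imp a)) : Prf (c.imp b) :=
  Prf.mp (Prf.mp (tS c a b) h1) h2

lemma tAndL (a b : Fml) : Prf ((a.and b).imp a) := by
  apply Prf.taut; intro v
  simp only [Fml.imp, evalB_neg, evalB_and]
  cases evalB v a <;> cases evalB v b <;> rfl

lemma tAndR (a b : Fml) : Prf ((a.and b).imp b) := by
  apply Prf.taut; intro v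
  simp only [Fml.imp, evalB_neg, evalB_and]
  cases evalB v a <;> cases evalB v b <;> rfl

lemma tPair (a b : Fml) : Prf (a.imp (b.imp (a.and b))) := by
  apply Prf.taut; intro v
  simp only [Fml.imp, evalB_neg, evalB_and]
  cases evalB v a <;> cases evalB v b <;> rfl

lemma tAndIntroImp {c a b : Fml} (h1 : Prf (c.imp a)) (h2 : Prf (c.imp b)) :
    Prf (c.imp (a.and b)) := by
  have t : Prf ((c.imp a).imp ((c.imp b).imp (c.imp (a.and b)))) := by
    apply Prf.taut; intro v
    simp only [Fml.imp, evalB_neg, evalB_and]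
    cases evalB v a <;> cases evalB v b <;> cases evalB v c <;> rfl
  exact Prf.mp (Prf.mp t h1) h2

lemma tDne (a : Fml) : Prf (a.neg.neg.imp a) := by
  apply Prf.taut; intro v
  simp only [Fml.imp, evalB_neg, evalB_and]
  cases evalB v a <;> rfl

lemma tDni (a : Fml) : Prf (a.imp a.neg.neg) := by
  apply Prf.taut; intro v
  simp only [Fml.imp, evalB_neg, evalB_and]
  cases evalB v a <;> rfl

lemma tContra {a b : Fml} (h : Prf (a.imp b)) : Prf (b.neg.imp a.neg) := by
  have t : Prf ((a.imp b).imp (b.neg.imp a.neg)) := by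
    apply Prf.taut; intro v
    simp only [Fml.imp, evalB_neg, evalB_and]
    cases evalB v a <;> cases evalB v b <;> rfl
  exact Prf.mp t h

lemma tNegE (a : Fml) : Prf (a.neg.imp (a.imp Bot)) := by
  apply Prf.taut; intro v
  simp only [Fml.imp, evalB_neg, evalB_and, evalB_atom]
  cases evalB v a <;> cases v (Fml.atom 0) <;> rfl

lemma tNegI (a : Fml) : Prf ((a.imp Bot).imp a.neg) := by
  apply Prf.taut; intro v
  simp only [Fml.imp, evalB_neg, evalB_and, evalB_atom]
  cases evalB v a <;> cases v (Fml.atom 0) <;> rfl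

lemma tConjNil : Prf (conj []) := by
  rw [conj_nil]
  apply Prf.taut; intro v
  simp only [Fml.imp, evalB_neg, evalB_and, evalB_atom]
  cases v (Fml.atom 0) <;> rfl

lemma tConjNilNeg (x : Fml) : Prf (((conj []).neg).imp x) := by
  rw [conj_nil]
  apply Prf.taut; intro v
  simp only [Fml.imp, evalB_neg, evalB_and, evalB_atom]
  cases v (Fml.atom 0) <;> cases evalB v x <;> rfl

lemma tDeduct (g c : Fml) : Prf (((g.and c).imp Bot).imp (c.imp g.neg)) := by
  apply Prf.taut; intro v
  simp only [Fml.imp, evalB_neg, evalB_and, evalB_atom]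
  cases evalB v g <;> cases evalB v c <;> cases v (Fml.atom 0) <;> rfl

lemma tSplitNeg {a b x : Fml} (h1 : Prf ((a.and b).imp x)) (h2 : Prf x.neg) :
    Prf (a.imp b.neg) := by
  have t : Prf (((a.and b).imp x).imp (x.neg.imp (a.imp b.neg))) := by
    apply Prf.taut; intro v
    simp only [Fml.imp, evalB_neg, evalB_and]
    cases evalB v a <;> cases evalB v b <;> cases evalB v x <;> rfl
  exact Prf.mp (Prf.mp t h1) h2

lemma tT1 (x c : Fml) : Prf (x.imp ((x.neg.and c).neg)) := by
  apply Prf.taut; intro v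
  simp only [Fml.imp, evalB_neg, evalB_and]
  cases evalB v x <;> cases evalB v c <;> rfl

lemma tT2 (y c : Fml) : Prf ((c.neg).imp ((y.and c).neg)) := by
  apply Prf.taut; intro v
  simp only [Fml.imp, evalB_neg, evalB_and]
  cases evalB v y <;> cases evalB v c <;> rfl

lemma tCase (x c g : Fml) :
    Prf ((x.imp g).imp (((c.neg).imp g).imp ((((x.neg).and c).neg).imp g))) := by
  apply Prf.taut; intro v
  simp only [Fml.imp, evalB_neg, evalB_and]
  cases evalB v x <;> cases evalB v c <;> cases evalB v g <;> rfl

/- ------------- conj toolkit ------------- -/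

lemma conj_mem {l : List Fml} {ψ : Fml} (h : ψ ∈ l) : Prf ((conj l).imp ψ) := by
  induction l with
  | nil => exact absurd h List.not_mem_nil
  | cons φ l ih =>
    rw [conj_cons]
    rcases List.mem_cons.mp h with h | h
    · subst h; exact tAndL _ _
    · exact tTrans (tAndR _ _) (ih h)

lemma conj_all {c : Fml} {l : List Fml} (h : ∀ ψ ∈ l, Prf (c.imp ψ)) :
    Prf (c.imp (conj l)) := by
  induction l with
  | nil => exact Prf.mp (tK (conj []) c) tConjNil
  | cons φ l ih =>
    rw [conj_cons]
    exact tAndIntroImp (h φ List.mem_cons_self)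
      (ih fun ψ hψ => h ψ (List.mem_cons_of_mem _ hψ))

/- ------------- derivability from a set ------------- -/

def Derives (s : Set Fml) (φ : Fml) : Prop :=
  ∃ l : List Fml, (∀ ψ ∈ l, ψ ∈ s) ∧ Prf ((conj l).imp φ)

lemma derives_of_mem {s : Set Fml} {φ : Fml} (h : φ ∈ s) : Derives s φ :=
  ⟨[φ], by simpa using h, conj_mem List.mem_cons_self⟩

lemma derives_of_prf {s : Set Fml} {φ : Fml} (h : Prf φ) : Derives s φ :=
  ⟨[], by simp, Prf.mp (tK φ (conj [])) h⟩

lemma derives_mp {s : Set Fml} {φ ψ : Fml} (h1 : Derives s (φ.imp ψ)) (h2 : Derives s φ) :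
    Derives s ψ := by
  obtain ⟨l1, hl1, hp1⟩ := h1
  obtain ⟨l2, hl2, hp2⟩ := h2
  refine ⟨l1 ++ l2, ?_, ?_⟩
  · intro χ hχ
    rcases List.mem_append.mp hχ with h | h
    · exact hl1 χ h
    · exact hl2 χ h
  · have c1 : Prf ((conj (l1 ++ l2)).imp (conj l1)) :=
      conj_all fun χ hχ => conj_mem (List.mem_append_left _ hχ)
    have c2 : Prf ((conj (l1 ++ l2)).imp (conj l2)) :=
      conj_all fun χ hχ => conj_mem (List.mem_append_right _ hχ)
    exact tMp2 (tTrans c1 hp1) (tTrans c2 hp2)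

lemma inconsistent_derives {s : Set Fml} (h : ¬ Consistent s) : Derives s Bot := by
  unfold Consistent at h
  push_neg at h
  obtain ⟨l, hl, hp⟩ := h
  exact ⟨l, hl, Prf.mp (tNegE (conj l)) hp⟩

lemma not_consistent_of_derives_bot {s : Set Fml} (h : Derives s Bot) : ¬ Consistent s := by
  obtain ⟨l, hl, hp⟩ := h
  intro hc
  exact hc l hl (Prf.mp (tNegI (conj l)) hp)

lemma derives_bot_of_both {s : Set Fml} {φ : Fml} (h1 : Derives s φ) (h2 : Derives s φ.neg) :
    Derives s Bot :=
  derives_mp (derives_mp (derives_of_prf (tNegE φ)) h2) h1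

/-- deduction lemma via filtering -/
lemma deduction {s : Set Fml} {γ : Fml} (h : ¬ Consistent (insert γ s)) :
    Derives s γ.neg := by
  obtain ⟨l, hl, hp⟩ := inconsistent_derives h
  classical
  set lf := l.filter (fun ψ => decide (ψ ≠ γ)) with hlf
  have hmem : ∀ ψ ∈ lf, ψ ∈ s := by
    intro ψ hψ
    have h1 := List.mem_filter.mp hψ
    have h2 : ψ ≠ γ := by simpa using h1.2
    rcases Set.mem_insert_iff.mp (hl ψ h1.1) with h3 | h3
    · exact absurd h3 h2
    · exact h3
  have hsplit : Prf ((γ.and (conj lf)).imp (conj l)) := by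
    apply conj_all
    intro ψ hψ
    by_cases hq : ψ = γ
    · subst hq; exact tAndL _ _
    · refine tTrans (tAndR _ _) (conj_mem ?_)
      exact List.mem_filter.mpr ⟨hψ, by simpa using hq⟩
  exact ⟨lf, hmem, Prf.mp (tDeduct γ (conj lf)) (tTrans hsplit hp)⟩

/- ------------- MCS lemmas ------------- -/

lemma _root_.MCS.mem_of_derives {s : Set Fml} (hs : MCS s) {φ : Fml} (h : Derives s φ) : φ ∈ s := by
  have hcons : Consistent (insert φ s) := by
    by_contra hc
    have h1 : Derives s φ.neg := deduction hc
    exact not_consistent_of_derives_bot (derives_bot_of_both h h1) hs.1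
  have heq := hs.2 _ hcons (Set.subset_insert _ _)
  rw [heq]
  exact Set.mem_insert _ _

lemma _root_.MCS.mem_of_prf {s : Set Fml} (hs : MCS s) {φ : Fml} (h : Prf φ) : φ ∈ s :=
  hs.mem_of_derives (derives_of_prf h)

lemma _root_.MCS.closed {s : Set Fml} (hs : MCS s) {φ ψ : Fml} (h : Prf (φ.imp ψ)) (hφ : φ ∈ s) :
    ψ ∈ s :=
  hs.mem_of_derives (derives_mp (derives_of_prf h) (derives_of_mem hφ))

lemma _root_.MCS.mp {s : Set Fml} (hs : MCS s) {φ ψ : Fml} (h : (φ.imp ψ) ∈ s) (hφ : φ ∈ s) :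
    ψ ∈ s :=
  hs.mem_of_derives (derives_mp (derives_of_mem h) (derives_of_mem hφ))

lemma _root_.MCS.not_both {s : Set Fml} (hs : MCS s) {φ : Fml} (h1 : φ ∈ s) (h2 : φ.neg ∈ s) :
    False :=
  not_consistent_of_derives_bot
    (derives_bot_of_both (derives_of_mem h1) (derives_of_mem h2)) hs.1

lemma _root_.MCS.neg_mem {s : Set Fml} (hs : MCS s) {φ : Fml} (h : φ ∉ s) : φ.neg ∈ s := by
  have hcons : Consistent (insert φ.neg s) := by
    by_contra hc
    have h1 : Derives s φ.neg.neg := deduction hc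
    have h2 : Derives s φ := derives_mp (derives_of_prf (tDne φ)) h1
    exact h (hs.mem_of_derives h2)
  have heq := hs.2 _ hcons (Set.subset_insert _ _)
  rw [heq]
  exact Set.mem_insert _ _

lemma _root_.MCS.and_iff {s : Set Fml} (hs : MCS s) {φ ψ : Fml} :
    (φ.and ψ) ∈ s ↔ (φ ∈ s ∧ ψ ∈ s) := by
  constructor
  · intro h
    exact ⟨hs.closed (tAndL φ ψ) h, hs.closed (tAndR φ ψ) h⟩
  · rintro ⟨h1, h2⟩
    exact hs.mem_of_derives
      (derives_mp (derives_mp (derives_of_prf (tPair φ ψ)) (derives_of_mem h1))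
        (derives_of_mem h2))

lemma _root_.MCS.or_elim {s : Set Fml} (hs : MCS s) {φ ψ : Fml} (h : (φ.or ψ) ∈ s) :
    φ ∈ s ∨ ψ ∈ s := by
  by_cases h1 : φ ∈ s
  · exact Or.inl h1
  by_cases h2 : ψ ∈ s
  · exact Or.inr h2
  exfalso
  have hφ := hs.neg_mem h1
  have hψ := hs.neg_mem h2
  have hand : (φ.neg.and ψ.neg) ∈ s := hs.and_iff.mpr ⟨hφ, hψ⟩
  exact hs.not_both hand h

lemma _root_.MCS.conj_mem {s : Set Fml} (hs : MCS s) {l : List Fml} (h : ∀ ψ ∈ l, ψ ∈ s) :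
    conj l ∈ s :=
  hs.mem_of_derives ⟨l, h, tId (conj l)⟩

/- ------------- Lindenbaum ------------- -/

lemma chain_list {c : Set (Set Fml)} (hchain : IsChain (· ⊆ ·) c) (hne : c.Nonempty)
    (l : List Fml) (hl : ∀ ψ ∈ l, ψ ∈ ⋃₀ c) : ∃ t ∈ c, ∀ ψ ∈ l, ψ ∈ t := by
  induction l with
  | nil => exact ⟨hne.choose, hne.choose_spec, by simp⟩
  | cons φ l ih =>
    obtain ⟨t1, ht1, hlt1⟩ := ih (fun ψ hψ => hl ψ (List.mem_cons_of_mem _ hψ))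
    obtain ⟨t2, ht2, hφ2⟩ := hl φ List.mem_cons_self
    obtain ⟨t3, ht3, h13, h23⟩ := hchain.directedOn t1 ht1 t2 ht2
    refine ⟨t3, ht3, ?_⟩
    intro ψ hψ
    rcases List.mem_cons.mp hψ with h | h
    · subst h; exact h23 hφ2
    · exact h13 (hlt1 ψ h)

lemma lindenbaum {s : Set Fml} (h : Consistent s) : ∃ t, s ⊆ t ∧ MCS t := by
  have hub : ∀ c ⊆ {t : Set Fml | Consistent t}, IsChain (· ⊆ ·) c → c.Nonempty →
      ∃ ub ∈ {t : Set Fml | Consistent t}, ∀ s ∈ c, s ⊆ ub := by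
    intro c hcS hchain hcne
    refine ⟨⋃₀ c, ?_, fun t ht => Set.subset_sUnion_of_mem ht⟩
    intro l hl href
    obtain ⟨t, htc, hlt⟩ := chain_list hchain hcne l hl
    exact hcS htc l hlt href
  obtain ⟨m, hsm, hmax⟩ := zorn_subset_nonempty {t : Set Fml | Consistent t} hub s h
  refine ⟨m, hsm, hmax.1, ?_⟩
  intro t ht hmt
  exact Set.Subset.antisymm hmt (hmax.2 ht hmt)

/- ------------- modal lifting ------------- -/

lemma Bmono {a b : Fml} (h : Prf (a.imp b)) : Prf (a.box.imp b.box) :=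
  Prf.mp (Prf.normBox a b) (Prf.necBox h)

lemma Kmono {a b : Fml} (h : Prf (a.imp b)) : Prf (a.K.imp b.K) :=
  Prf.mp (Prf.normK a b) (Prf.necK h)

lemma conj_box_pull (l : List Fml) : Prf ((conj (l.map Fml.box)).imp (conj l).box) := by
  induction l with
  | nil =>
    simp only [List.map_nil]
    exact Prf.mp (tK ((conj []).box) (conj [])) (Prf.necBox tConjNil)
  | cons φ l ih =>
    simp only [List.map_cons]
    rw [conj_cons, conj_cons]
    have hPair : Prf (φ.imp ((conj l).imp (φ.and (conj l)))) := tPair φ (conj l)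
    have hChain : Prf (φ.box.imp (((conj l).box).imp ((φ.and (conj l)).box))) :=
      tTrans (Bmono hPair) (Prf.normBox (conj l) (φ.and (conj l)))
    have h1 : Prf ((φ.box.and (conj (l.map Fml.box))).imp φ.box) := tAndL _ _
    have h2 : Prf ((φ.box.and (conj (l.map Fml.box))).imp ((conj l).box)) :=
      tTrans (tAndR _ _) ih
    exact tMp2 (tTrans h1 hChain) h2

lemma conj_K_pull (l : List Fml) : Prf ((conj (l.map Fml.K)).imp (conj l).K) := by
  induction l with
  | nil =>
    simp only [List.map_nil]
    exact Prf.mp (tK ((conj []).K) (conj [])) (Prf.necK tConjNil)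
  | cons φ l ih =>
    simp only [List.map_cons]
    rw [conj_cons, conj_cons]
    have hPair : Prf (φ.imp ((conj l).imp (φ.and (conj l)))) := tPair φ (conj l)
    have hChain : Prf (φ.K.imp (((conj l).K).imp ((φ.and (conj l)).K))) :=
      tTrans (Kmono hPair) (Prf.normK (conj l) (φ.and (conj l)))
    have h1 : Prf ((φ.K.and (conj (l.map Fml.K))).imp φ.K) := tAndL _ _
    have h2 : Prf ((φ.K.and (conj (l.map Fml.K))).imp ((conj l).K)) :=
      tTrans (tAndR _ _) ih
    exact tMp2 (tTrans h1 hChain) h2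

lemma box_lift {s : Set Fml} (hs : MCS s) {l : List Fml} {χ : Fml}
    (hl : ∀ ψ ∈ l, ψ.box ∈ s) (h : Prf ((conj l).imp χ)) : χ.box ∈ s := by
  have d1 : Derives s (conj (l.map Fml.box)) := by
    refine ⟨l.map Fml.box, ?_, tId _⟩
    intro ψ hψ
    obtain ⟨a, ha, rfl⟩ := List.mem_map.mp hψ
    exact hl a ha
  have d2 : Derives s ((conj l).box) := derives_mp (derives_of_prf (conj_box_pull l)) d1
  exact hs.mem_of_derives (derives_mp (derives_of_prf (Bmono h)) d2)

lemma K_lift {s : Set Fml} (hs : MCS s) {l : List Fml} {χ : Fml}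
    (hl : ∀ ψ ∈ l, ψ.K ∈ s) (h : Prf ((conj l).imp χ)) : χ.K ∈ s := by
  have d1 : Derives s (conj (l.map Fml.K)) := by
    refine ⟨l.map Fml.K, ?_, tId _⟩
    intro ψ hψ
    obtain ⟨a, ha, rfl⟩ := List.mem_map.mp hψ
    exact hl a ha
  have d2 : Derives s ((conj l).K) := derives_mp (derives_of_prf (conj_K_pull l)) d1
  exact hs.mem_of_derives (derives_mp (derives_of_prf (Kmono h)) d2)

end MPTAux

namespace MPTAux

/- ------------- RK / RB structural lemmas ------------- -/

lemma rk_refl {s : Set Fml} (hs : MCS s) : RK s s :=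
  fun φ h => hs.closed (Prf.kT φ) h

lemma rk_trans {a b c : Set Fml} (ha : MCS a) (h1 : RK a b) (h2 : RK b c) : RK a c :=
  fun φ hφ => h2 φ (h1 _ (ha.closed (Prf.k4 φ) hφ))

/-- derived negative introspection: ⊢ ¬φ → K¬Kφ -/
lemma negIntro (φ : Fml) : Prf (φ.neg.imp ((φ.K.neg).K)) := by
  have h5 : Prf (φ.neg.imp ((φ.neg.neg.K.neg).K)) := Prf.k5 φ.neg
  have h1 : Prf (φ.K.imp ((φ.neg.neg).K)) := Kmono (tDni φ)
  have h2 : Prf (((φ.neg.neg).K.neg).imp (φ.K.neg)) := tContra h1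
  exact tTrans h5 (Kmono h2)

lemma rk_symm {a b : Set Fml} (ha : MCS a) (hb : MCS b) (h : RK a b) : RK b a := by
  intro φ hφ
  by_contra hn
  have h1 : φ.neg ∈ a := ha.neg_mem hn
  have h2 : ((φ.K.neg).K) ∈ a := ha.closed (negIntro φ) h1
  have h3 : (φ.K).neg ∈ b := h _ h2
  exact hb.not_both hφ h3

lemma rb_trans {a b c : Set Fml} (ha : MCS a) (h1 : RB a b) (h2 : RB b c) : RB a c :=
  fun φ hφ => h2 _ (h1 _ (ha.closed (Prf.box4 φ) hφ))

/- ------------- existence lemmas ------------- -/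

lemma box_witness {s : Set Fml} (hs : MCS s) {φ : Fml} (h : φ.box ∉ s) :
    ∃ t, MCS t ∧ RB s t ∧ φ.neg ∈ t := by
  have hcons : Consistent (insert φ.neg {ψ | ψ.box ∈ s}) := by
    by_contra hc
    obtain ⟨l, hl, hp⟩ := deduction hc
    have h2 : Prf ((conj l).imp φ) := tTrans hp (tDne φ)
    exact h (box_lift hs hl h2)
  obtain ⟨t, hsub, ht⟩ := lindenbaum hcons
  exact ⟨t, ht, fun ψ hψ => hsub (Set.mem_insert_of_mem _ hψ), hsub (Set.mem_insert _ _)⟩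

lemma K_witness {s : Set Fml} (hs : MCS s) {φ : Fml} (h : φ.K ∉ s) :
    ∃ t, MCS t ∧ RK s t ∧ φ.neg ∈ t := by
  have hcons : Consistent (insert φ.neg {ψ | ψ.K ∈ s}) := by
    by_contra hc
    obtain ⟨l, hl, hp⟩ := deduction hc
    have h2 : Prf ((conj l).imp φ) := tTrans hp (tDne φ)
    exact h (K_lift hs hl h2)
  obtain ⟨t, hsub, ht⟩ := lindenbaum hcons
  exact ⟨t, ht, fun ψ hψ => hsub (Set.mem_insert_of_mem _ hψ), hsub (Set.mem_insert _ _)⟩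

/- ------------- persistence of a negated conjunction of negated boxes ------------- -/

lemma negconj_box : ∀ l : List Fml, (∀ ψ ∈ l, ∃ δ : Fml, ψ = (δ.box).neg) →
    Prf ((conj l).neg.imp ((conj l).neg.box)) := by
  intro l
  induction l with
  | nil =>
    intro _
    exact tConjNilNeg _
  | cons ψ l ih =>
    intro h
    obtain ⟨δ, rfl⟩ := h _ List.mem_cons_self
    have ih' := ih (fun ψ hψ => h ψ (List.mem_cons_of_mem _ hψ))
    rw [conj_cons]
    set C := conj l with hC
    -- goal : Prf ((((δ.box).neg.and C).neg).imp ((((δ.box).neg.and C).neg).box))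
    have b1 : Prf ((δ.box).imp ((((δ.box).neg.and C).neg).box)) :=
      tTrans (Prf.box4 δ) (Bmono (tT1 (δ.box) C))
    have b2 : Prf ((C.neg).imp ((((δ.box).neg.and C).neg).box)) :=
      tTrans ih' (Bmono (tT2 ((δ.box).neg) C))
    exact Prf.mp (Prf.mp (tCase (δ.box) C ((((δ.box).neg.and C).neg).box)) b1) b2

/- ------------- the cross property ------------- -/

lemma cross_prop {s t u : Set Fml} (hs : MCS s) (ht : MCS t) (hu : MCS u)
    (hst : RB s t) (htu : RK t u) :
    ∃ v, MCS v ∧ RK s v ∧ RB v u := by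
  classical
  set A : Set Fml := {χ | χ.K ∈ s} ∪ {ψ | ∃ δ : Fml, ψ = (δ.box).neg ∧ δ.box ∉ u} with hA
  have hcons : Consistent A := by
    intro l hl href
    set lK := l.filter (fun ψ => decide (ψ.K ∈ s)) with hlK
    set lB := l.filter (fun ψ => !decide (ψ.K ∈ s)) with hlB
    have hKmem : ∀ ψ ∈ lK, ψ.K ∈ s := by
      intro ψ hψ
      have h1 := List.mem_filter.mp hψ
      simpa using h1.2
    have hBshape : ∀ ψ ∈ lB, ∃ δ : Fml, ψ = (δ.box).neg ∧ δ.box ∉ u := by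
      intro ψ hψ
      have h1 := List.mem_filter.mp hψ
      have h2 : ψ.K ∉ s := by simpa using h1.2
      rcases hl ψ h1.1 with h3 | h3
      · exact absurd h3 h2
      · exact h3
    have hsplit : Prf (((conj lK).and (conj lB)).imp (conj l)) := by
      apply conj_all
      intro ψ hψ
      by_cases hp : ψ.K ∈ s
      · refine tTrans (tAndL _ _) (conj_mem ?_)
        exact List.mem_filter.mpr ⟨hψ, by simpa using hp⟩
      · refine tTrans (tAndR _ _) (conj_mem ?_)
        exact List.mem_filter.mpr ⟨hψ, by simpa using hp⟩
    have h1 : Prf ((conj lK).imp ((conj lB).neg)) := tSplitNeg hsplit href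
    have h2 : Prf (((conj lB).neg).imp (((conj lB).neg).box)) :=
      negconj_box lB (fun ψ hψ => ⟨(hBshape ψ hψ).choose, (hBshape ψ hψ).choose_spec.1⟩)
    have h3 : Prf ((conj lK).imp ((((conj lB).neg)).box)) := tTrans h1 h2
    have h4 : ((((conj lB).neg).box).K) ∈ s := K_lift hs hKmem h3
    have h5 : ((((conj lB).neg).K).box) ∈ s := hs.closed (Prf.cross ((conj lB).neg)) h4
    have h6 : (((conj lB).neg).K) ∈ t := hst _ h5
    have h7 : ((conj lB).neg) ∈ u := htu _ h6
    have h8 : conj lB ∈ u := by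
      apply hu.conj_mem
      intro ψ hψ
      obtain ⟨δ, rfl, hδ⟩ := hBshape ψ hψ
      exact hu.neg_mem hδ
    exact hu.not_both h8 h7
  obtain ⟨v, hAv, hv⟩ := lindenbaum hcons
  refine ⟨v, hv, fun χ hχ => hAv (Or.inl hχ), ?_⟩
  intro δ hδ
  by_cases hbu : δ.box ∈ u
  · exact hu.closed (Prf.boxT δ) hbu
  · exact absurd hδ (fun hc => hv.not_both hc (hAv (Or.inr ⟨δ, rfl, hbu⟩)))

/- ------------- connectedness ------------- -/

lemma conn_prop {s y z : Set Fml} (hs : MCS s) (hy : MCS y) (hz : MCS z)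
    (h1 : RB s y) (h2 : RB s z) : RB y z ∨ RB z y := by
  by_contra hc
  push_neg at hc
  obtain ⟨hyz, hzy⟩ := hc
  obtain ⟨α, hα⟩ := not_forall.mp hyz
  obtain ⟨hα1, hα2⟩ := Classical.not_imp.mp hα
  obtain ⟨β, hβ⟩ := not_forall.mp hzy
  obtain ⟨hβ1, hβ2⟩ := Classical.not_imp.mp hβ
  have hconn : (((α.box.imp β).box).or ((β.box.imp α).box)) ∈ s :=
    hs.mem_of_prf (Prf.conn α β)
  rcases hs.or_elim hconn with h | h
  · have h3 : (α.box.imp β) ∈ y := h1 _ h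
    exact hβ2 (hy.mp h3 hα1)
  · have h3 : (β.box.imp α) ∈ z := h2 _ h
    exact hα2 (hz.mp h3 hβ1)

/- ------------- the main agreement induction ------------- -/

theorem zmain : ∀ φ : Fml, ∀ u v : Set Fml, MCS u → MCS v → RB u v →
    (∃ y, MCS y ∧ RK v y ∧ RB y u) → (φ ∈ u ↔ φ ∈ v) := by
  intro φ
  induction φ with
  | atom n =>
    intro u v hu hv huv _
    constructor
    · intro h
      have hL : Prf ((Fml.atom n).imp ((Fml.atom n).box)) :=
        Prf.mp (tAndL _ _) (Prf.atomPerm n)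
      exact huv _ (hu.closed hL h)
    · intro h
      by_contra hn
      have h1 : (Fml.atom n).neg ∈ u := hu.neg_mem hn
      have hR : Prf (((Fml.atom n).neg).imp (((Fml.atom n).neg).box)) :=
        Prf.mp (tAndR _ _) (Prf.atomPerm n)
      have h2 : ((Fml.atom n).neg) ∈ v := huv _ (hu.closed hR h1)
      exact hv.not_both h h2
  | neg ψ ih =>
    intro u v hu hv huv hw
    have hiff := ih u v hu hv huv hw
    constructor
    · intro h
      refine hv.neg_mem (fun hc => ?_)
      exact hu.not_both (hiff.mpr hc) h
    · intro h
      refine hu.neg_mem (fun hc => ?_)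
      exact hv.not_both (hiff.mp hc) h
  | and ψ χ ihψ ihχ =>
    intro u v hu hv huv hw
    have h1 := ihψ u v hu hv huv hw
    have h2 := ihχ u v hu hv huv hw
    rw [hu.and_iff, hv.and_iff, h1, h2]
  | K ψ ih =>
    intro u v hu hv huv hw
    obtain ⟨y, hy, hvy, hyu⟩ := hw
    constructor
    · intro h
      by_contra hn
      obtain ⟨w, hw', hvw, hnegw⟩ := K_witness hv hn
      obtain ⟨m, hm, hum, hmw⟩ := cross_prop hu hv hw' huv hvw
      have hψm : ψ ∈ m := hum _ h
      obtain ⟨y₂, hy₂, hyy₂, hy₂m⟩ := cross_prop hy hu hm hyu hum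
      have hwv : RK w v := rk_symm hv hw' hvw
      have hwy : RK w y := rk_trans hw' hwv hvy
      have hwy₂ : RK w y₂ := rk_trans hw' hwy hyy₂
      have hiff := ih m w hm hw' hmw ⟨y₂, hy₂, hwy₂, hy₂m⟩
      exact hw'.not_both (hiff.mp hψm) hnegw
    · intro h
      by_contra hn
      obtain ⟨w, hw', huw, hnegw⟩ := K_witness hu hn
      have hKy : ψ.K ∈ y := hvy _ (hv.closed (Prf.k4 ψ) h)
      obtain ⟨m, hm, hym, hmw⟩ := cross_prop hy hu hw' hyu huw
      have hψm : ψ ∈ m := hym _ hKy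
      have hvm : RK v m := rk_trans hv hvy hym
      obtain ⟨y₃, hy₃, huy₃, hy₃m⟩ := cross_prop hu hv hm huv hvm
      have hwy₃ : RK w y₃ := rk_trans hw' (rk_symm hu hw' huw) huy₃
      have hiff := ih m w hm hw' hmw ⟨y₃, hy₃, hwy₃, hy₃m⟩
      exact hw'.not_both (hiff.mp hψm) hnegw
  | box ψ ih =>
    intro u v hu hv huv hw
    obtain ⟨y, hy, hvy, hyu⟩ := hw
    constructor
    · intro h
      exact huv _ (hu.closed (Prf.box4 ψ) h)
    · intro h
      by_contra hn
      obtain ⟨z, hz, huz, hnegz⟩ := box_witness hu hn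
      rcases conn_prop hu hv hz huv huz with hvz | hzv
      · exact hz.not_both (hvz _ h) hnegz
      · have hyz : RB y z := rb_trans hy hyu huz
        have hiff := ih z v hz hv hzv ⟨y, hy, hvy, hyz⟩
        have hψv : ψ ∈ v := hv.closed (Prf.boxT ψ) h
        exact hz.not_both (hiff.mpr hψv) hnegz

end MPTAux

/-- In the MPT canonical model, `→□` is antisymmetric. -/
theorem canonical_box_antisymm (s t : Set Fml) (hs : MCS s) (ht : MCS t)
    (hst : RB s t) (hts : RB t s) :
    s = t := by
  ext φ
  exact MPTAux.zmain φ s t hs ht hst ⟨t, ht, MPTAux.rk_refl ht, hts⟩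
end
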